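/- For every probability measure Q on H, the averaged adversarial risk is sandwiched between the worst-case adversarial risk minus a total variation term and the worst-case adversarial risk itself: R^adv_D(B_Q) − TV(Π, Δ) ≤ R_𝐃(B_Q) ≤ R^adv_D(B_Q). -/

import Mathlib

open MeasureTheory ProbabilityTheory ENNReal

/-- The averaged adversarial risk is sandwiched between the worst-case
adversarial risk minus a total variation term and the worst-case adversarial risk:
`R^adv_D(B_Q) − TV(Π, Δ) ≤ R_𝐃(B_Q) ≤ R^adv_D(B_Q)`. -/
theorem averaged_sandwich_adversarial
    {d : ℕ} (hd : 1 ≤ d)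
    {H : Type*} [MeasurableSpace H]
    (f : H → (Fin d → ℝ) → ℝ)
    (hf_meas : Measurable (Function.uncurry f))
    (hf_bdd : ∀ h x, f h x ∈ Set.Icc (-1 : ℝ) 1)
    (D : Measure ((Fin d → ℝ) × ↥({-1, 1} : Set ℝ))) [IsProbabilityMeasure D]
    (b : ℝ) (hb : 0 < b)
    (ω : Kernel ((Fin d → ℝ) × ↥({-1, 1} : Set ℝ)) (Fin d → ℝ)) [IsMarkovKernel ω]
    (hωB : ∀ z, ω z {ε | ‖ε‖ ≤ b} = 1)
    (Q : Measure H) [IsProbabilityMeasure Q]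
    (hsup_meas : Measurable fun z : (Fin d → ℝ) × ↥({-1, 1} : Set ℝ) =>
      ⨆ ε ∈ {ε : Fin d → ℝ | ‖ε‖ ≤ b},
        (if (z.2 : ℝ) * ∫ h, f h (z.1 + ε) ∂Q ≤ 0 then (1 : ℝ≥0∞) else 0))
    (εstar : (Fin d → ℝ) × ↥({-1, 1} : Set ℝ) → (Fin d → ℝ))
    (hεstar_meas : Measurable εstar)
    (hεstar_mem : ∀ z, ‖εstar z‖ ≤ b)
    (hεstar_max : ∀ᵐ z ∂D,
      (if (z.2 : ℝ) * ∫ h, f h (z.1 + εstar z) ∂Q ≤ 0 then (1 : ℝ≥0∞) else 0)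
        = ⨆ ε ∈ {ε : Fin d → ℝ | ‖ε‖ ≤ b},
            (if (z.2 : ℝ) * ∫ h, f h (z.1 + ε) ∂Q ≤ 0 then (1 : ℝ≥0∞) else 0)) :
    (∫⁻ z, ⨆ ε ∈ {ε : Fin d → ℝ | ‖ε‖ ≤ b},
        (if (z.2 : ℝ) * ∫ h, f h (z.1 + ε) ∂Q ≤ 0 then (1 : ℝ≥0∞) else 0) ∂D).toReal
      - (⨆ (A : Set ((Fin d → ℝ) × ↥({-1, 1} : Set ℝ))) (_ : MeasurableSet A),
          |((D.map fun z => (z.1 + εstar z, z.2)) A).toReal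
            - (((D.compProd ω).map fun p => (p.1.1 + p.2, p.1.2)) A).toReal|)
      ≤ ((D.compProd ω) {p | (p.1.2 : ℝ) * ∫ h, f h (p.1.1 + p.2) ∂Q ≤ 0}).toReal
    ∧ ((D.compProd ω) {p | (p.1.2 : ℝ) * ∫ h, f h (p.1.1 + p.2) ∂Q ≤ 0}).toReal
      ≤ (∫⁻ z, ⨆ ε ∈ {ε : Fin d → ℝ | ‖ε‖ ≤ b},
          (if (z.2 : ℝ) * ∫ h, f h (z.1 + ε) ∂Q ≤ 0 then (1 : ℝ≥0∞) else 0) ∂D).toReal := by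
  classical
  have hXY : True := trivial
  -- measurability of the margin function
  have hint : Measurable fun x : Fin d → ℝ => ∫ h, f h x ∂Q := by
    have : Measurable fun p : (Fin d → ℝ) × H => f p.2 p.1 := hf_meas.comp measurable_swap
    exact this.stronglyMeasurable.integral_prod_right'.measurable
  -- T : the bad event in (Fin d → ℝ) × ↥({-1, 1} : Set ℝ)
  set T : Set ((Fin d → ℝ) × ↥({-1, 1} : Set ℝ)) := {q | (q.2 : ℝ) * ∫ h, f h q.1 ∂Q ≤ 0} with hT_def
  have hT : MeasurableSet T := by
    apply measurableSet_le _ measurable_const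
    exact (measurable_subtype_coe.comp measurable_snd).mul (hint.comp measurable_fst)
  -- S : the event in ((Fin d → ℝ) × ↥({-1, 1} : Set ℝ)) × (Fin d → ℝ)
  set S : Set (((Fin d → ℝ) × ↥({-1, 1} : Set ℝ)) × (Fin d → ℝ)) := {p | (p.1.2 : ℝ) * ∫ h, f h (p.1.1 + p.2) ∂Q ≤ 0} with hS_def
  have hS : MeasurableSet S := by
    apply measurableSet_le _ measurable_const
    exact (measurable_subtype_coe.comp (measurable_snd.comp measurable_fst)).mul
      (hint.comp ((measurable_fst.fst).add measurable_snd))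
  have hball : MeasurableSet {ε : Fin d → ℝ | ‖ε‖ ≤ b} :=
    measurableSet_le measurable_norm measurable_const
  -- sup ≤ 1 pointwise
  have hsup_le_one : ∀ z : (Fin d → ℝ) × ↥({-1, 1} : Set ℝ),
      (⨆ ε ∈ {ε : Fin d → ℝ | ‖ε‖ ≤ b},
        (if (z.2 : ℝ) * ∫ h, f h (z.1 + ε) ∂Q ≤ 0 then (1 : ℝ≥0∞) else 0)) ≤ 1 := by
    intro z
    refine iSup_le fun ε => iSup_le fun _ => ?_
    split <;> simp
  -- the lintegral of the sup is ≤ 1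
  have hlint_le : (∫⁻ z, ⨆ ε ∈ {ε : Fin d → ℝ | ‖ε‖ ≤ b},
      (if (z.2 : ℝ) * ∫ h, f h (z.1 + ε) ∂Q ≤ 0 then (1 : ℝ≥0∞) else 0) ∂D) ≤ 1 := by
    calc _ ≤ ∫⁻ _, (1 : ℝ≥0∞) ∂D := lintegral_mono hsup_le_one
    _ = 1 := by simp
  have hlint_ne : (∫⁻ z, ⨆ ε ∈ {ε : Fin d → ℝ | ‖ε‖ ≤ b},
      (if (z.2 : ℝ) * ∫ h, f h (z.1 + ε) ∂Q ≤ 0 then (1 : ℝ≥0∞) else 0) ∂D) ≠ ⊤ :=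
    ne_top_of_le_ne_top one_ne_top hlint_le
  -- compProd value
  have hcomp : (D.compProd ω) S = ∫⁻ z, ω z (Prod.mk z ⁻¹' S) ∂D :=
    Measure.compProd_apply hS
  -- Part 2 : upper bound
  have part2 : (D.compProd ω) S ≤ ∫⁻ z, ⨆ ε ∈ {ε : Fin d → ℝ | ‖ε‖ ≤ b},
      (if (z.2 : ℝ) * ∫ h, f h (z.1 + ε) ∂Q ≤ 0 then (1 : ℝ≥0∞) else 0) ∂D := by
    rw [hcomp]
    refine lintegral_mono fun z => ?_
    by_cases hc : ∃ ε : Fin d → ℝ, ‖ε‖ ≤ b ∧ (z.2 : ℝ) * ∫ h, f h (z.1 + ε) ∂Q ≤ 0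
    · obtain ⟨ε, hε, h2⟩ := hc
      calc ω z (Prod.mk z ⁻¹' S) ≤ 1 := prob_le_one
      _ ≤ _ := by
          refine le_trans ?_ (le_iSup₂ (f := fun ε _ =>
            (if (z.2 : ℝ) * ∫ h, f h (z.1 + ε) ∂Q ≤ 0 then (1 : ℝ≥0∞) else 0)) ε hε)
          rw [if_pos h2]
    · have hsub : (Prod.mk z ⁻¹' S) ⊆ {ε : Fin d → ℝ | ‖ε‖ ≤ b}ᶜ := by
        intro ε hε hεb
        exact hc ⟨ε, hεb, hε⟩
      have h0 : ω z {ε : Fin d → ℝ | ‖ε‖ ≤ b}ᶜ = 0 := by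
        rw [measure_compl hball (ne_top_of_le_ne_top one_ne_top prob_le_one), hωB z]
        simp
      calc ω z (Prod.mk z ⁻¹' S) ≤ 0 := h0 ▸ measure_mono hsub
      _ ≤ _ := by simp
  -- the lintegral of the sup equals D of the εstar event
  have hεT : MeasurableSet {z : (Fin d → ℝ) × ↥({-1, 1} : Set ℝ) | (z.2 : ℝ) * ∫ h, f h (z.1 + εstar z) ∂Q ≤ 0} := by
    apply measurableSet_le _ measurable_const
    exact (measurable_subtype_coe.comp measurable_snd).mul
      (hint.comp (measurable_fst.add hεstar_meas))
  have hlint_eq : (∫⁻ z, ⨆ ε ∈ {ε : Fin d → ℝ | ‖ε‖ ≤ b},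
      (if (z.2 : ℝ) * ∫ h, f h (z.1 + ε) ∂Q ≤ 0 then (1 : ℝ≥0∞) else 0) ∂D)
      = D {z : (Fin d → ℝ) × ↥({-1, 1} : Set ℝ) | (z.2 : ℝ) * ∫ h, f h (z.1 + εstar z) ∂Q ≤ 0} := by
    rw [← lintegral_congr_ae hεstar_max]
    have : (fun z : (Fin d → ℝ) × ↥({-1, 1} : Set ℝ) => if (z.2 : ℝ) * ∫ h, f h (z.1 + εstar z) ∂Q ≤ 0 then (1 : ℝ≥0∞) else 0)
        = Set.indicator {z : (Fin d → ℝ) × ↥({-1, 1} : Set ℝ) | (z.2 : ℝ) * ∫ h, f h (z.1 + εstar z) ∂Q ≤ 0} 1 := by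
      ext z; simp [Set.indicator_apply]
    rw [this, lintegral_indicator_one hεT]
  -- identify Pi T and De T
  have hφ : Measurable fun z : (Fin d → ℝ) × ↥({-1, 1} : Set ℝ) => (z.1 + εstar z, z.2) :=
    (measurable_fst.add hεstar_meas).prodMk measurable_snd
  have hψ : Measurable fun p : ((Fin d → ℝ) × ↥({-1, 1} : Set ℝ)) × (Fin d → ℝ) => (p.1.1 + p.2, p.1.2) :=
    ((measurable_fst.fst.add measurable_snd)).prodMk (measurable_snd.comp measurable_fst)
  have hPiT : (D.map fun z : (Fin d → ℝ) × ↥({-1, 1} : Set ℝ) => (z.1 + εstar z, z.2)) T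
      = D {z : (Fin d → ℝ) × ↥({-1, 1} : Set ℝ) | (z.2 : ℝ) * ∫ h, f h (z.1 + εstar z) ∂Q ≤ 0} := by
    rw [Measure.map_apply hφ hT]; rfl
  have hDeT : ((D.compProd ω).map fun p : ((Fin d → ℝ) × ↥({-1, 1} : Set ℝ)) × (Fin d → ℝ) => (p.1.1 + p.2, p.1.2)) T
      = (D.compProd ω) S := by
    rw [Measure.map_apply hψ hT]; rfl
  -- TV boundedness
  set Pi := D.map fun z : (Fin d → ℝ) × ↥({-1, 1} : Set ℝ) => (z.1 + εstar z, z.2) with hPi_def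
  set De := (D.compProd ω).map fun p : ((Fin d → ℝ) × ↥({-1, 1} : Set ℝ)) × (Fin d → ℝ) => (p.1.1 + p.2, p.1.2) with hDe_def
  haveI : IsProbabilityMeasure Pi := Measure.isProbabilityMeasure_map hφ.aemeasurable
  haveI : IsProbabilityMeasure De := Measure.isProbabilityMeasure_map hψ.aemeasurable
  have habs : ∀ A : Set ((Fin d → ℝ) × ↥({-1, 1} : Set ℝ)), |(Pi A).toReal - (De A).toReal| ≤ 1 := by
    intro A
    have h1 : (Pi A).toReal ≤ 1 := by
      simpa using ENNReal.toReal_mono one_ne_top (prob_le_one (μ := Pi) (s := A))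
    have h2 : (De A).toReal ≤ 1 := by
      simpa using ENNReal.toReal_mono one_ne_top (prob_le_one (μ := De) (s := A))
    have h3 : (0:ℝ) ≤ (Pi A).toReal := ENNReal.toReal_nonneg
    have h4 : (0:ℝ) ≤ (De A).toReal := ENNReal.toReal_nonneg
    rw [abs_le]; constructor <;> linarith
  have hBdd : BddAbove (Set.range fun A : Set ((Fin d → ℝ) × ↥({-1, 1} : Set ℝ)) =>
      ⨆ _ : MeasurableSet A, |(Pi A).toReal - (De A).toReal|) := by
    refine ⟨1, ?_⟩
    rintro x ⟨A, rfl⟩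
    exact Real.iSup_le (fun _ => habs A) zero_le_one
  have hTV : |(Pi T).toReal - (De T).toReal|
      ≤ ⨆ (A : Set ((Fin d → ℝ) × ↥({-1, 1} : Set ℝ))) (_ : MeasurableSet A), |(Pi A).toReal - (De A).toReal| :=
    by
      refine le_ciSup_of_le hBdd T ?_
      rw [ciSup_pos hT]
  constructor
  · -- lower bound
    have key : (∫⁻ z, ⨆ ε ∈ {ε : Fin d → ℝ | ‖ε‖ ≤ b},
        (if (z.2 : ℝ) * ∫ h, f h (z.1 + ε) ∂Q ≤ 0 then (1 : ℝ≥0∞) else 0) ∂D).toReal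
        = (Pi T).toReal := by rw [hlint_eq, hPiT]
    rw [key]
    have := hTV
    have habs' : (Pi T).toReal - (De T).toReal ≤ |(Pi T).toReal - (De T).toReal| := le_abs_self _
    have : (Pi T).toReal - (⨆ (A : Set ((Fin d → ℝ) × ↥({-1, 1} : Set ℝ))) (_ : MeasurableSet A),
        |(Pi A).toReal - (De A).toReal|) ≤ (De T).toReal := by linarith
    calc _ ≤ (De T).toReal := this
    _ = _ := by rw [hDeT]
  · -- upper bound
    exact ENNReal.toReal_mono hlint_ne part2
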